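/- (Theorem LMI) Assume ν̄ᵢ > 0 for all i, W positive definite and U positive definite, and let U^{1/2} denote the positive semidefinite square root of U. The following are equivalent: (1) there exist a real n×m matrix K̄ and a real n×n matrix S̄ with S̄ ≻ 0 and φ(K̄, S̄) ≺ S̄; (2) there exist a real n×n matrix Y ≻ 0 and a real n×m matrix Z such that the symmetric block matrix P(Y,Z) is positive definite, where P(Y,Z) has block rows and columns indexed by two distinguished indices a, b and, for each subset I ⊆ {1,…,m}, two indices (I,1) (of size n) and (I,2) (of size m), with blocks P_{a,a} = Y, P_{a,b} = Y, P_{b,b} = W⁻¹, P_{a,(I,1)} = η_I (Y Aᵀ + Z N_I B), P_{a,(I,2)} = η_I Z N_I U^{1/2}, P_{(I,1),(I,1)} = Y, P_{(I,2),(I,2)} = I_m (the m×m identity), all remaining off-diagonal blocks equal to zero, and the lower-triangular blocks determined by symmetry. -/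

import Mathlib

open Matrix

section FamBlocks
variable {q ι k : Type*}

/-- horizontal concatenation of a family of matrices -/
def famMat (F : ι → Matrix q k ℝ) : Matrix q (ι × k) ℝ :=
  of fun i p => F p.1 i p.2

/-- block diagonal over a family -/
def bdiag [DecidableEq ι] (G : ι → Matrix k k ℝ) : Matrix (ι × k) (ι × k) ℝ :=
  of fun p r => if p.1 = r.1 then G p.1 p.2 r.2 else 0

variable [Fintype ι] [DecidableEq ι] [Fintype k]

lemma bdiag_mul_bdiag (G H : ι → Matrix k k ℝ) :
    bdiag G * bdiag H = bdiag fun I => G I * H I := by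
  ext ⟨I, i⟩ ⟨J, j⟩
  simp only [bdiag, Matrix.mul_apply, Fintype.sum_prod_type, of_apply, ite_and, mul_ite,
    ite_mul, mul_zero, zero_mul, Finset.sum_ite_eq, Finset.mem_univ, if_true,
    Finset.sum_ite_irrel, Finset.sum_const_zero]
  split <;> simp_all

omit [Fintype ι] [Fintype k] in
lemma bdiag_one [DecidableEq k] : bdiag (fun _ : ι => (1 : Matrix k k ℝ)) = 1 := by
  ext ⟨I, i⟩ ⟨J, j⟩
  simp [bdiag, Matrix.one_apply, ite_and, Prod.ext_iff]

lemma famMat_mul_bdiag (F : ι → Matrix q k ℝ) (G : ι → Matrix k k ℝ) :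
    famMat F * bdiag G = famMat fun I => F I * G I := by
  ext i ⟨J, j⟩
  simp [famMat, bdiag, Matrix.mul_apply, Fintype.sum_prod_type, mul_ite, mul_zero,
    Finset.sum_ite_eq, ite_and]

omit [DecidableEq ι] in
lemma famMat_mul_transpose (F F' : ι → Matrix q k ℝ) :
    famMat F * (famMat F')ᵀ = ∑ I, F I * (F' I)ᵀ := by
  ext i j
  simp only [famMat, Matrix.mul_apply, Matrix.transpose_apply, Matrix.sum_apply, of_apply]
  rw [Fintype.sum_prod_type]

lemma bdiag_posDef {G : ι → Matrix k k ℝ} (hG : ∀ I, (G I).PosDef) : (bdiag G).PosDef := by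
  rw [posDef_iff_dotProduct_mulVec]; constructor
  · ext ⟨I, i⟩ ⟨J, j⟩
    by_cases h : I = J
    · subst h; simpa [bdiag] using congrFun (congrFun (hG I).1 i) j
    · simp [bdiag, h, fun a : J = I => h a.symm, Ne.symm h]
  · intro x hx
    have key : dotProduct (star x) (bdiag G *ᵥ x)
        = ∑ I, dotProduct (star fun i => x (I, i)) (G I *ᵥ fun i => x (I, i)) := by
      simp [dotProduct, Matrix.mulVec, bdiag, Fintype.sum_prod_type, mul_ite, ite_mul,
        mul_zero, zero_mul, Finset.sum_ite_eq, Finset.mul_sum]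
    rw [key]
    obtain ⟨⟨I0, i0⟩, hI0⟩ : ∃ p, x p ≠ 0 := Function.ne_iff.mp hx
    have h1 : ∀ I ∈ Finset.univ,
        0 ≤ dotProduct (star fun i => x (I, i)) (G I *ᵥ fun i => x (I, i)) :=
      fun I _ => (hG I).posSemidef.dotProduct_mulVec_nonneg _
    have h2 : 0 < dotProduct (star fun i => x (I0, i)) (G I0 *ᵥ fun i => x (I0, i)) :=
      (hG I0).dotProduct_mulVec_pos (fun h => hI0 (congrFun h i0))
    exact Finset.sum_pos' h1 ⟨I0, Finset.mem_univ _, h2⟩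

end FamBlocks

section PosDefBlocks
variable {p r : Type*} [Fintype p] [Fintype r] [DecidableEq p] [DecidableEq r]

omit [DecidableEq p] [DecidableEq r] in
lemma posDef_fromBlocks_diag {A : Matrix p p ℝ} {D : Matrix r r ℝ}
    (hA : A.PosDef) (hD : D.PosDef) : (fromBlocks A 0 0 D).PosDef := by
  rw [posDef_iff_dotProduct_mulVec]; constructor
  · exact isHermitian_fromBlocks_iff.mpr ⟨hA.1, by simp, by simp, hD.1⟩
  · intro x hx
    have hsplit : x = Sum.elim (x ∘ Sum.inl) (x ∘ Sum.inr) := (Sum.elim_comp_inl_inr x).symm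
    rw [hsplit, fromBlocks_mulVec]
    simp only [zero_mulVec, add_zero, zero_add, Sum.elim_comp_inl, Sum.elim_comp_inr]
    have heq : dotProduct (star (Sum.elim (x ∘ Sum.inl) (x ∘ Sum.inr)))
        (Sum.elim (A *ᵥ (x ∘ Sum.inl)) (D *ᵥ (x ∘ Sum.inr)))
        = dotProduct (star (x ∘ Sum.inl)) (A *ᵥ (x ∘ Sum.inl))
          + dotProduct (star (x ∘ Sum.inr)) (D *ᵥ (x ∘ Sum.inr)) := by
      simp [dotProduct, Fintype.sum_sum_type]
    rw [heq]
    have hor : x ∘ Sum.inl ≠ 0 ∨ x ∘ Sum.inr ≠ 0 := by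
      by_contra h
      push_neg at h
      apply hx; funext i
      cases i with
      | inl i => exact congrFun h.1 i
      | inr i => exact congrFun h.2 i
    rcases hor with h | h
    · exact add_pos_of_pos_of_nonneg (hA.dotProduct_mulVec_pos h) (hD.posSemidef.dotProduct_mulVec_nonneg _)
    · exact add_pos_of_nonneg_of_pos (hA.posSemidef.dotProduct_mulVec_nonneg _) (hD.dotProduct_mulVec_pos h)

omit [DecidableEq p] in
lemma posDef_fromBlocks₂₂ (A : Matrix p p ℝ) (B : Matrix p r ℝ) {D : Matrix r r ℝ}
    (hD : D.PosDef) : (fromBlocks A B Bᵀ D).PosDef ↔ (A - B * D⁻¹ * Bᵀ).PosDef := by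
  have := hD.isUnit.invertible
  have hBt : Bᵀ = Bᴴ := (conjTranspose_eq_transpose_of_trivial B).symm
  rw [hBt]
  rw [posDef_iff_dotProduct_mulVec (M := fromBlocks A B Bᴴ D)]
  constructor
  · rintro ⟨hherm, hpos⟩
    rw [posDef_iff_dotProduct_mulVec]; constructor
    · rw [← IsHermitian.fromBlocks₂₂ A B hD.1]; exact hherm
    · intro x hx
      have h := hpos (x := Sum.elim x (-((D⁻¹ * Bᴴ) *ᵥ x)))
        (by intro h; apply hx; funext i; exact congrFun h (Sum.inl i))
      rw [dotProduct_mulVec, schur_complement_eq₂₂ A B x _ hD.1] at h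
      simpa [dotProduct_mulVec] using h
  · intro hS
    constructor
    · rw [IsHermitian.fromBlocks₂₂ A B hD.1]; exact hS.1
    · intro v hv
      rw [← Sum.elim_comp_inl_inr v, dotProduct_mulVec,
        schur_complement_eq₂₂ A B _ _ hD.1]
      by_cases hx : v ∘ Sum.inl = 0
      · have hy : v ∘ Sum.inr ≠ 0 := by
          intro hy; apply hv; funext i
          cases i with
          | inl i => exact congrFun hx i
          | inr i => exact congrFun hy i
        apply add_pos_of_pos_of_nonneg
        · have heq : (D⁻¹ * Bᴴ) *ᵥ (v ∘ Sum.inl) + (v ∘ Sum.inr) = v ∘ Sum.inr := by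
            rw [hx]; simp
          rw [heq]
          have := hD.dotProduct_mulVec_pos hy
          rwa [dotProduct_mulVec] at this
        · rw [← dotProduct_mulVec]; exact hS.posSemidef.dotProduct_mulVec_nonneg _
      · apply add_pos_of_nonneg_of_pos
        · have := hD.posSemidef.dotProduct_mulVec_nonneg ((D⁻¹ * Bᴴ) *ᵥ (v ∘ Sum.inl) + (v ∘ Sum.inr))
          rwa [dotProduct_mulVec] at this
        · rw [← dotProduct_mulVec]; exact hS.dotProduct_mulVec_pos hx

lemma posDef_conj_mul {M Y : Matrix p p ℝ} (hM : M.PosDef) (hY : IsUnit Y)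
    (hYs : Yᵀ = Y) : (Y * M * Y).PosDef := by
  rw [posDef_iff_dotProduct_mulVec]; constructor
  · have hMh : Mᵀ = M := by
      have := hM.1; rwa [IsHermitian, conjTranspose_eq_transpose_of_trivial] at this
    have heq : (Y * M * Y)ᵀ = Y * M * Y := by
      rw [transpose_mul, transpose_mul, hYs, hMh, Matrix.mul_assoc]
    rwa [IsHermitian, conjTranspose_eq_transpose_of_trivial]
  · intro x hx
    have hY' : Y *ᵥ x ≠ 0 := by
      intro h
      exact hx ((Matrix.mulVec_injective_iff_isUnit.mpr hY) (show Y *ᵥ x = Y *ᵥ 0 by simpa using h))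
    have h := hM.dotProduct_mulVec_pos hY'
    have heq : dotProduct (star x) ((Y * M * Y) *ᵥ x)
        = dotProduct (star (Y *ᵥ x)) (M *ᵥ (Y *ᵥ x)) := by
      simp only [star_trivial, ← mulVec_mulVec]
      rw [dotProduct_mulVec x Y, show x ᵥ* Y = Y *ᵥ x by rw [← vecMul_transpose, hYs]]
    rw [heq]; exact h

lemma posDef_conj_iff {M Y : Matrix p p ℝ} (hY : Y.PosDef) :
    (Y * M * Y).PosDef ↔ M.PosDef := by
  have hYs : Yᵀ = Y := by
    have := hY.1; rwa [IsHermitian, conjTranspose_eq_transpose_of_trivial] at this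
  have hYd : IsUnit Y.det := (Matrix.isUnit_iff_isUnit_det _).mp hY.isUnit
  constructor
  · intro h
    have h2 := posDef_conj_mul h hY.inv.isUnit (by rw [transpose_nonsing_inv, hYs])
    have heq : Y⁻¹ * (Y * M * Y) * Y⁻¹ = M := by
      rw [Matrix.mul_assoc Y M Y, Matrix.nonsing_inv_mul_cancel_left _ _ hYd,
        Matrix.mul_nonsing_inv_cancel_right _ _ hYd]
    rwa [heq] at h2
  · intro h; exact posDef_conj_mul h hY.isUnit hYs

end PosDefBlocks


/-- The scalar η_I = √(∏_{i∈I} ν̄ᵢ · ∏_{i∉I}(1−ν̄ᵢ)). -/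
noncomputable def eta {m : ℕ} (ν : Fin m → ℝ) (I : Finset (Fin m)) : ℝ :=
  Real.sqrt ((∏ i ∈ I, ν i) * (∏ i ∈ Iᶜ, (1 - ν i)))

/-- The m×m diagonal 0/1 matrix N_I whose i-th diagonal entry is 1 exactly when i ∈ I. -/
def NI {m : ℕ} (I : Finset (Fin m)) : Matrix (Fin m) (Fin m) ℝ :=
  Matrix.diagonal fun i => if i ∈ I then 1 else 0

/-- φ(K,X) = Σ_{I⊆{1,…,m}} η_I² (F_I(K) X F_I(K)ᵀ + V_I(K)), where
F_I(K) = Aᵀ + K N_I Bᵀ and V_I(K) = W + K N_I U N_I Kᵀ. -/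
noncomputable def phi {m n : ℕ} (ν : Fin m → ℝ) (A W : Matrix (Fin n) (Fin n) ℝ)
    (B : Matrix (Fin n) (Fin m) ℝ) (U : Matrix (Fin m) (Fin m) ℝ)
    (K : Matrix (Fin n) (Fin m) ℝ) (X : Matrix (Fin n) (Fin n) ℝ) :
    Matrix (Fin n) (Fin n) ℝ :=
  ∑ I : Finset (Fin m), (eta ν I) ^ 2 •
    ((Aᵀ + K * NI I * Bᵀ) * X * (Aᵀ + K * NI I * Bᵀ)ᵀ + (W + K * NI I * U * NI I * Kᵀ))

/-- M(X) = Σ_{I⊆{1,…,m}} η_I² N_I (U + Bᵀ X B) N_I. -/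
noncomputable def Mop {m n : ℕ} (ν : Fin m → ℝ) (B : Matrix (Fin n) (Fin m) ℝ)
    (U : Matrix (Fin m) (Fin m) ℝ) (X : Matrix (Fin n) (Fin n) ℝ) :
    Matrix (Fin m) (Fin m) ℝ :=
  ∑ I : Finset (Fin m), (eta ν I) ^ 2 • (NI I * (U + Bᵀ * X * B) * NI I)

/-- The modified algebraic Riccati operator
Π_c(X) = Aᵀ X A + W − Aᵀ X B N̄ M(X)⁻¹ N̄ Bᵀ X A, where N̄ = diag(ν̄₁,…,ν̄ₘ). -/
noncomputable def Pic {m n : ℕ} (ν : Fin m → ℝ) (A W : Matrix (Fin n) (Fin n) ℝ)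
    (B : Matrix (Fin n) (Fin m) ℝ) (U : Matrix (Fin m) (Fin m) ℝ)
    (X : Matrix (Fin n) (Fin n) ℝ) : Matrix (Fin n) (Fin n) ℝ :=
  Aᵀ * X * A + W -
    Aᵀ * X * B * Matrix.diagonal ν * (Mop ν B U X)⁻¹ * Matrix.diagonal ν * Bᵀ * X * A

/-- The positive semidefinite square root of a positive semidefinite matrix, as defined in
the older Mathlib (removed since): `U D^{1/2} Uᴴ` from the spectral decomposition. -/
noncomputable def Matrix.PosSemidef.sqrt {n : Type*} [Fintype n] [DecidableEq n]
    {A : Matrix n n ℝ} (hA : A.PosSemidef) : Matrix n n ℝ :=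
  (hA.1.eigenvectorUnitary : Matrix n n ℝ) * diagonal ((↑) ∘ Real.sqrt ∘ hA.1.eigenvalues) *
    (star (hA.1.eigenvectorUnitary : Matrix n n ℝ))

/-- Index type for the block LMI matrix: a distinguished n-block `a`, a
distinguished n-block `b`, and for each subset I ⊆ {1,…,m} an n-block (I,1)
and an m-block (I,2); total size 2n + 2^m(n+m). -/
abbrev LMIIdx (m n : ℕ) :=
  Fin n ⊕ (Fin n ⊕ ((Finset (Fin m) × Fin n) ⊕ (Finset (Fin m) × Fin m)))

/-- The symmetric block matrix P(Y,Z) of the LMI: blocks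
P_{a,a} = Y, P_{a,b} = Y, P_{b,b} = W⁻¹,
P_{a,(I,1)} = η_I (Y Aᵀ + Z N_I Bᵀ), P_{a,(I,2)} = η_I Z N_I U^{1/2},
P_{(I,1),(I,1)} = Y, P_{(I,2),(I,2)} = I_m, all other off-diagonal blocks 0,
lower-triangular blocks determined by symmetry. -/
noncomputable def LMIMat {m n : ℕ} (ν : Fin m → ℝ)
    (A W : Matrix (Fin n) (Fin n) ℝ) (B : Matrix (Fin n) (Fin m) ℝ)
    (Usqrt : Matrix (Fin m) (Fin m) ℝ)
    (Y : Matrix (Fin n) (Fin n) ℝ) (Z : Matrix (Fin n) (Fin m) ℝ) :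
    Matrix (LMIIdx m n) (LMIIdx m n) ℝ :=
  fun p q =>
    match p, q with
    | Sum.inl i, Sum.inl j => Y i j
    | Sum.inl i, Sum.inr (Sum.inl j) => Y i j
    | Sum.inl i, Sum.inr (Sum.inr (Sum.inl (I, j))) =>
        (eta ν I • (Y * Aᵀ + Z * NI I * Bᵀ)) i j
    | Sum.inl i, Sum.inr (Sum.inr (Sum.inr (I, j))) =>
        (eta ν I • (Z * NI I * Usqrt)) i j
    | Sum.inr (Sum.inl i), Sum.inl j => Yᵀ i j
    | Sum.inr (Sum.inl i), Sum.inr (Sum.inl j) => W⁻¹ i j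
    | Sum.inr (Sum.inl _), Sum.inr (Sum.inr _) => 0
    | Sum.inr (Sum.inr (Sum.inl (I, i))), Sum.inl j =>
        (eta ν I • (Y * Aᵀ + Z * NI I * Bᵀ)ᵀ) i j
    | Sum.inr (Sum.inr (Sum.inl (I, i))), Sum.inr (Sum.inr (Sum.inl (J, j))) =>
        if I = J then Y i j else 0
    | Sum.inr (Sum.inr (Sum.inl _)), _ => 0
    | Sum.inr (Sum.inr (Sum.inr (I, i))), Sum.inl j =>
        (eta ν I • (Z * NI I * Usqrt)ᵀ) i j
    | Sum.inr (Sum.inr (Sum.inr (I, i))), Sum.inr (Sum.inr (Sum.inr (J, j))) =>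
        if I = J then (1 : Matrix (Fin m) (Fin m) ℝ) i j else 0
    | Sum.inr (Sum.inr (Sum.inr _)), _ => 0

lemma psd_sqrt_transpose {n : Type*} [Fintype n] [DecidableEq n]
    {A : Matrix n n ℝ} (hA : A.PosSemidef) : hA.sqrtᵀ = hA.sqrt := by
  unfold Matrix.PosSemidef.sqrt
  rw [Matrix.star_eq_conjTranspose, conjTranspose_eq_transpose_of_trivial, transpose_mul,
    transpose_mul, transpose_transpose, diagonal_transpose, Matrix.mul_assoc]

lemma psd_sqrt_mul_self {n : Type*} [Fintype n] [DecidableEq n]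
    {A : Matrix n n ℝ} (hA : A.PosSemidef) : hA.sqrt * hA.sqrt = A := by
  have hs := hA.1.spectral_theorem
  rw [Unitary.conjStarAlgAut_apply] at hs
  unfold Matrix.PosSemidef.sqrt
  set V := (hA.1.eigenvectorUnitary : Matrix n n ℝ)
  have hD : diagonal ((↑) ∘ Real.sqrt ∘ hA.1.eigenvalues) *
      diagonal ((↑) ∘ Real.sqrt ∘ hA.1.eigenvalues) =
      diagonal (RCLike.ofReal ∘ hA.1.eigenvalues : n → ℝ) := by
    rw [diagonal_mul_diagonal]; congr 1; funext i
    simp [Real.mul_self_sqrt (hA.eigenvalues_nonneg i)]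
  calc V * diagonal ((↑) ∘ Real.sqrt ∘ hA.1.eigenvalues) * star V *
        (V * diagonal ((↑) ∘ Real.sqrt ∘ hA.1.eigenvalues) * star V)
      = V * diagonal ((↑) ∘ Real.sqrt ∘ hA.1.eigenvalues) * (star V * V) *
          diagonal ((↑) ∘ Real.sqrt ∘ hA.1.eigenvalues) * star V := by
        simp only [Matrix.mul_assoc]
    _ = V * (diagonal ((↑) ∘ Real.sqrt ∘ hA.1.eigenvalues) *
          diagonal ((↑) ∘ Real.sqrt ∘ hA.1.eigenvalues)) * star V := by
        rw [Unitary.coe_star_mul_self]; simp only [Matrix.mul_one, Matrix.mul_assoc]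
    _ = A := by rw [hD]; exact hs.symm

lemma eta_sq {m : ℕ} {ν : Fin m → ℝ} (hν : ∀ i, ν i ∈ Set.Ioc (0 : ℝ) 1) (I : Finset (Fin m)) :
    eta ν I ^ 2 = (∏ i ∈ I, ν i) * ∏ i ∈ Iᶜ, (1 - ν i) := by
  apply Real.sq_sqrt
  apply mul_nonneg
  · exact Finset.prod_nonneg fun i _ => (hν i).1.le
  · exact Finset.prod_nonneg fun i _ => by linarith [(hν i).2]

lemma sum_eta_sq {m : ℕ} {ν : Fin m → ℝ} (hν : ∀ i, ν i ∈ Set.Ioc (0 : ℝ) 1) :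
    ∑ I : Finset (Fin m), eta ν I ^ 2 = 1 := by
  have h : ∀ I : Finset (Fin m),
      eta ν I ^ 2 = (∏ i ∈ I, ν i) * ∏ i ∈ Finset.univ \ I, (1 - ν i) := by
    intro I
    rw [eta_sq hν I, Finset.compl_eq_univ_sdiff]
  calc ∑ I : Finset (Fin m), eta ν I ^ 2
      = ∑ I ∈ Finset.univ.powerset, (∏ i ∈ I, ν i) * ∏ i ∈ Finset.univ \ I, (1 - ν i) := by
        rw [Finset.powerset_univ]; exact Finset.sum_congr rfl fun I _ => h I
    _ = ∏ i : Fin m, (ν i + (1 - ν i)) := (Finset.prod_add _ _ _).symm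
    _ = 1 := by simp

section Assembly
variable {m n : ℕ}

abbrev RIdx (m n : ℕ) := Fin n ⊕ ((Finset (Fin m) × Fin n) ⊕ (Finset (Fin m) × Fin m))

noncomputable def C1 (ν : Fin m → ℝ) (A : Matrix (Fin n) (Fin n) ℝ)
    (B : Matrix (Fin n) (Fin m) ℝ) (Y : Matrix (Fin n) (Fin n) ℝ)
    (Z : Matrix (Fin n) (Fin m) ℝ) (I : Finset (Fin m)) : Matrix (Fin n) (Fin n) ℝ :=
  eta ν I • (Y * Aᵀ + Z * NI I * Bᵀ)

noncomputable def C2 (ν : Fin m → ℝ) (Us : Matrix (Fin m) (Fin m) ℝ)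
    (Z : Matrix (Fin n) (Fin m) ℝ) (I : Finset (Fin m)) : Matrix (Fin n) (Fin m) ℝ :=
  eta ν I • (Z * NI I * Us)

noncomputable def Cmat (ν : Fin m → ℝ) (A : Matrix (Fin n) (Fin n) ℝ)
    (B : Matrix (Fin n) (Fin m) ℝ) (Us : Matrix (Fin m) (Fin m) ℝ)
    (Y : Matrix (Fin n) (Fin n) ℝ) (Z : Matrix (Fin n) (Fin m) ℝ) :
    Matrix (Fin n) (RIdx m n) ℝ :=
  fromCols Y (fromCols (famMat (C1 ν A B Y Z)) (famMat (C2 ν Us Z)))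

noncomputable def Dmat (m : ℕ) (Wi Y : Matrix (Fin n) (Fin n) ℝ) :
    Matrix (RIdx m n) (RIdx m n) ℝ :=
  fromBlocks Wi 0 0
    (fromBlocks (bdiag fun _ : Finset (Fin m) => Y) 0 0
      (bdiag fun _ : Finset (Fin m) => (1 : Matrix (Fin m) (Fin m) ℝ)))

lemma LMIMat_eq (ν : Fin m → ℝ) (A W : Matrix (Fin n) (Fin n) ℝ)
    (B : Matrix (Fin n) (Fin m) ℝ) (Us : Matrix (Fin m) (Fin m) ℝ)
    (Y : Matrix (Fin n) (Fin n) ℝ) (Z : Matrix (Fin n) (Fin m) ℝ) :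
    LMIMat ν A W B Us Y Z
      = fromBlocks Y (Cmat ν A B Us Y Z) (Cmat ν A B Us Y Z)ᵀ (Dmat m W⁻¹ Y) := by
  ext p q
  rcases p with i | i | ⟨I, i⟩ | ⟨I, i⟩ <;> rcases q with j | j | ⟨J, j⟩ | ⟨J, j⟩ <;>
    simp only [LMIMat, Cmat, Dmat, C1, C2, famMat, bdiag, fromBlocks_apply₁₁,
      fromBlocks_apply₁₂, fromBlocks_apply₂₁, fromBlocks_apply₂₂, fromCols_apply_inl,
      fromCols_apply_inr, transpose_apply, of_apply, Matrix.smul_apply, _root_.zero_apply,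
      Matrix.zero_apply] <;> try rfl

end Assembly

section Core
variable {m n : ℕ}

lemma lmi_iff (ν : Fin m → ℝ) (hν : ∀ i, ν i ∈ Set.Ioc (0 : ℝ) 1)
    (A W : Matrix (Fin n) (Fin n) ℝ) (B : Matrix (Fin n) (Fin m) ℝ)
    (U : Matrix (Fin m) (Fin m) ℝ) (hW : W.PosDef) (hU : U.PosDef)
    {Y : Matrix (Fin n) (Fin n) ℝ} (hY : Y.PosDef) (Z : Matrix (Fin n) (Fin m) ℝ) :
    (LMIMat ν A W B hU.posSemidef.sqrt Y Z).PosDef ↔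
      (Y⁻¹ - phi ν A W B U (Y⁻¹ * Z) Y⁻¹).PosDef := by
  set Us := hU.posSemidef.sqrt with hUsdef
  have hYd : IsUnit Y.det := (Matrix.isUnit_iff_isUnit_det _).mp hY.isUnit
  have hWd : IsUnit W.det := (Matrix.isUnit_iff_isUnit_det _).mp hW.isUnit
  have hYs : Yᵀ = Y := by
    have := hY.1; rwa [IsHermitian, conjTranspose_eq_transpose_of_trivial] at this
  have hUss : Usᵀ = Us := by
    exact psd_sqrt_transpose hU.posSemidef
  have hUs2 : Us * Us = U := psd_sqrt_mul_self hU.posSemidef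
  have hNIt : ∀ I : Finset (Fin m), (NI I)ᵀ = NI I := fun I => Matrix.diagonal_transpose _
  set K := Y⁻¹ * Z with hKdef
  have hZ : Y * K = Z := Matrix.mul_nonsing_inv_cancel_left Y Z hYd
  have hZt : Zᵀ = Kᵀ * Y := by rw [← hZ, transpose_mul, hYs]
  -- positive definiteness of the D block
  have hDpd : (Dmat m W⁻¹ Y).PosDef :=
    posDef_fromBlocks_diag hW.inv
      (posDef_fromBlocks_diag (bdiag_posDef fun _ => hY)
        (bdiag_posDef fun _ => Matrix.PosDef.one))
  -- inverse of the D block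
  have hDinv : (Dmat m W⁻¹ Y)⁻¹ = Dmat m W Y⁻¹ := by
    apply Matrix.inv_eq_right_inv
    have h1 : W⁻¹ * W = 1 := Matrix.nonsing_inv_mul W hWd
    have h2 : Y * Y⁻¹ = 1 := Matrix.mul_nonsing_inv Y hYd
    rw [Dmat, Dmat, fromBlocks_multiply]
    simp [fromBlocks_multiply, bdiag_mul_bdiag, h1, h2, bdiag_one, fromBlocks_one]
  -- the Schur complement computation
  have hCE : Cmat ν A B Us Y Z * Dmat m W Y⁻¹ * (Cmat ν A B Us Y Z)ᵀ
      = Y * W * Yᵀ + ((∑ I, C1 ν A B Y Z I * Y⁻¹ * (C1 ν A B Y Z I)ᵀ)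
          + ∑ I, C2 ν Us Z I * (C2 ν Us Z I)ᵀ) := by
    rw [Cmat, Dmat, transpose_fromCols, transpose_fromCols,
      fromCols_mul_fromBlocks, fromCols_mul_fromBlocks, bdiag_one]
    simp only [Matrix.mul_zero, Matrix.zero_mul, add_zero, zero_add, Matrix.mul_one,
      famMat_mul_bdiag]
    rw [fromCols_mul_fromRows, fromCols_mul_fromRows, famMat_mul_transpose,
      famMat_mul_transpose]
  -- per-subset identities
  have key1 : ∀ I : Finset (Fin m), C1 ν A B Y Z I * Y⁻¹ * (C1 ν A B Y Z I)ᵀ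
      = eta ν I ^ 2 • (Y * ((Aᵀ + K * NI I * Bᵀ) * Y⁻¹ * (Aᵀ + K * NI I * Bᵀ)ᵀ) * Y) := by
    intro I
    have hF : Y * Aᵀ + Z * NI I * Bᵀ = Y * (Aᵀ + K * NI I * Bᵀ) := by
      rw [Matrix.mul_add, ← Matrix.mul_assoc, ← Matrix.mul_assoc, hZ]
    rw [C1, hF]
    simp only [transpose_smul, smul_mul_assoc, mul_smul_comm, smul_smul, pow_two]
    congr 1
    rw [transpose_mul, hYs]
    simp only [Matrix.mul_assoc]
  have key2 : ∀ I : Finset (Fin m), C2 ν Us Z I * (C2 ν Us Z I)ᵀ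
      = eta ν I ^ 2 • (Y * (K * NI I * U * NI I * Kᵀ) * Y) := by
    intro I
    rw [C2]
    rw [transpose_smul, Matrix.smul_mul, Matrix.mul_smul, smul_smul, ← pow_two]
    congr 1
    rw [transpose_mul, transpose_mul, hUss, hNIt, hZt, ← hZ, ← hUs2]
    simp only [Matrix.mul_assoc]
  have key3 : Y * W * Yᵀ = ∑ I : Finset (Fin m), eta ν I ^ 2 • (Y * W * Y) := by
    rw [hYs, ← Finset.sum_smul, sum_eta_sq hν, one_smul]
  -- the congruence identity
  have halg : Y - (Y * W * Yᵀ + ((∑ I, C1 ν A B Y Z I * Y⁻¹ * (C1 ν A B Y Z I)ᵀ)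
          + ∑ I, C2 ν Us Z I * (C2 ν Us Z I)ᵀ))
      = Y * (Y⁻¹ - phi ν A W B U K Y⁻¹) * Y := by
    rw [Finset.sum_congr rfl fun I _ => key1 I, Finset.sum_congr rfl fun I _ => key2 I, key3]
    rw [phi, Matrix.mul_sub, Matrix.sub_mul, Matrix.mul_assoc Y Y⁻¹ Y,
      Matrix.mul_nonsing_inv_cancel_left _ _ hYd, Finset.mul_sum, Finset.sum_mul]
    have hterm : ∀ I : Finset (Fin m),
        Y * (eta ν I ^ 2 • ((Aᵀ + K * NI I * Bᵀ) * Y⁻¹ * (Aᵀ + K * NI I * Bᵀ)ᵀ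
            + (W + K * NI I * U * NI I * Kᵀ))) * Y
        = eta ν I ^ 2 • (Y * ((Aᵀ + K * NI I * Bᵀ) * Y⁻¹ * (Aᵀ + K * NI I * Bᵀ)ᵀ) * Y)
          + (eta ν I ^ 2 • (Y * W * Y)
            + eta ν I ^ 2 • (Y * (K * NI I * U * NI I * Kᵀ) * Y)) := by
      intro I
      simp only [Matrix.mul_add, Matrix.add_mul, mul_smul_comm, smul_mul_assoc, smul_add]
    rw [Finset.sum_congr rfl fun I _ => hterm I, Finset.sum_add_distrib,
      Finset.sum_add_distrib]
    abel
  rw [LMIMat_eq, posDef_fromBlocks₂₂ _ _ hDpd, hDinv, hCE, halg, posDef_conj_iff hY]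

end Core

/-- Theorem LMI: with ν̄ᵢ ∈ (0,1], W ≻ 0 and U ≻ 0, the following
are equivalent: (1) there exist K̄ and S̄ ≻ 0 with φ(K̄, S̄) ≺ S̄; (2) there exist
Y ≻ 0 and Z such that the block matrix P(Y,Z) (built with the positive
semidefinite square root U^{1/2} of U) is positive definite. -/
theorem LMI_equivalence (m n : ℕ) (hm : 0 < m) (hn : 0 < n) (ν : Fin m → ℝ)
    (hν : ∀ i, ν i ∈ Set.Ioc (0 : ℝ) 1)
    (A W : Matrix (Fin n) (Fin n) ℝ) (B : Matrix (Fin n) (Fin m) ℝ)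
    (U : Matrix (Fin m) (Fin m) ℝ) (hW : W.PosDef) (hU : U.PosDef) :
    (∃ (Kbar : Matrix (Fin n) (Fin m) ℝ) (Sbar : Matrix (Fin n) (Fin n) ℝ),
        Sbar.PosDef ∧ (Sbar - phi ν A W B U Kbar Sbar).PosDef) ↔
    (∃ (Y : Matrix (Fin n) (Fin n) ℝ) (Z : Matrix (Fin n) (Fin m) ℝ),
        Y.PosDef ∧ (LMIMat ν A W B hU.posSemidef.sqrt Y Z).PosDef) := by
  constructor
  · rintro ⟨Kb, S, hS, hmain⟩
    have hSd : IsUnit S.det := (Matrix.isUnit_iff_isUnit_det _).mp hS.isUnit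
    refine ⟨S⁻¹, S⁻¹ * Kb, hS.inv, ?_⟩
    rw [lmi_iff ν hν A W B U hW hU hS.inv]
    have h1 : (S⁻¹)⁻¹ = S := Matrix.nonsing_inv_nonsing_inv S hSd
    rw [h1, Matrix.mul_nonsing_inv_cancel_left _ _ hSd]
    exact hmain
  · rintro ⟨Y, Z, hY, hP⟩
    exact ⟨Y⁻¹ * Z, Y⁻¹, hY.inv, (lmi_iff ν hν A W B U hW hU hY Z).mp hP⟩
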